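/- Let A be a nonempty closed and geodesically convex subset of the l∞ plane ℝ²_∞ and let p = (p₁,p₂) ∉ A be a point such that exactly the two sectors S₁^+(p) and S₂^+(p) intersect A (the sectors S₁^−(p) and S₂^−(p) do not meet A). Let t₀ be the supremum of the parameters t ≥ 0 for which the antidiagonal line through (p₁+t, p₂+t), namely I^{+−}(p₁+t,p₂+t) ∪ I^{−+}(p₁+t,p₂+t), does not intersect A, and set q = (p₁ + t₀, p₂ + t₀). Then d∞(a, q) ≤ d∞(a, p) for every a ∈ A. -/
import Mathlib


/-- A geodesic from `p` to `q` in a metric space: an isometric embedding of the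
real interval `[0, dist p q]` sending `0` to `p` and `dist p q` to `q`. -/
def IsGeodesic {X : Type*} [MetricSpace X] (p q : X) (γ : ℝ → X) : Prop :=
  γ 0 = p ∧ γ (dist p q) = q ∧
    ∀ s ∈ Set.Icc (0 : ℝ) (dist p q), ∀ t ∈ Set.Icc (0 : ℝ) (dist p q),
      dist (γ s) (γ t) = |s - t|

/-- A subset `A` is geodesically convex if any two of its points are joined by a
geodesic of the ambient space whose image lies in `A`. -/
def GeodConvex {X : Type*} [MetricSpace X] (A : Set X) : Prop :=
  ∀ p ∈ A, ∀ q ∈ A, ∃ γ : ℝ → X, IsGeodesic p q γ ∧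
    ∀ t ∈ Set.Icc (0 : ℝ) (dist p q), γ t ∈ A

/-- The sector `S₁^ε(p)` in the `l∞` plane: points `q` with `d∞(p,q) = ε(q₁ − p₁)`. -/
def sector1 (ε : ℝ) (p : ℝ × ℝ) : Set (ℝ × ℝ) :=
  {q | dist p q = ε * (q.1 - p.1)}

/-- The sector `S₂^ε(p)` in the `l∞` plane: points `q` with `d∞(p,q) = ε(q₂ − p₂)`. -/
def sector2 (ε : ℝ) (p : ℝ × ℝ) : Set (ℝ × ℝ) :=
  {q | dist p q = ε * (q.2 - p.2)}

/-- The `ε₁ε₂`-diagonal ray at `p`: `{(p₁ + ε₁ t, p₂ + ε₂ t) : t ≥ 0}`. -/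
def ray (ε₁ ε₂ : ℝ) (p : ℝ × ℝ) : Set (ℝ × ℝ) :=
  {q | ∃ t : ℝ, 0 ≤ t ∧ q = (p.1 + ε₁ * t, p.2 + ε₂ * t)}

/-- Two-sectors case: if `A ⊆ ℝ²_∞` is nonempty, closed and geodesically convex,
`p ∉ A`, exactly the sectors `S₁^+(p)` and `S₂^+(p)` meet `A`, and
`t₀` is the supremum of the `t ≥ 0` for which the antidiagonal line through
`(p₁+t, p₂+t)` misses `A`, then `q = (p₁+t₀, p₂+t₀)` satisfies
`d∞(a,q) ≤ d∞(a,p)` for all `a ∈ A`. -/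
theorem two_sectors_case (A : Set (ℝ × ℝ)) (hne : A.Nonempty)
    (hcl : IsClosed A) (hgc : GeodConvex A)
    (p : ℝ × ℝ) (hp : p ∉ A)
    (h1p : (sector1 1 p ∩ A).Nonempty) (h2p : (sector2 1 p ∩ A).Nonempty)
    (h1m : sector1 (-1) p ∩ A = ∅) (h2m : sector2 (-1) p ∩ A = ∅)
    (t₀ : ℝ)
    (ht₀ : t₀ = sSup {t : ℝ | 0 ≤ t ∧
      (ray 1 (-1) (p.1 + t, p.2 + t) ∪ ray (-1) 1 (p.1 + t, p.2 + t)) ∩ A = ∅}) :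
    ∀ a ∈ A, dist a (p.1 + t₀, p.2 + t₀) ≤ dist a p := by
  classical
  set T : Set ℝ := {t : ℝ | 0 ≤ t ∧
      (ray 1 (-1) (p.1 + t, p.2 + t) ∪ ray (-1) 1 (p.1 + t, p.2 + t)) ∩ A = ∅} with hT
  -- characterization of T
  have hline : ∀ t : ℝ, t ∈ T ↔ 0 ≤ t ∧ ∀ b ∈ A, b.1 + b.2 ≠ p.1 + p.2 + 2 * t := by
    intro t
    constructor
    · rintro ⟨ht, hemp⟩
      refine ⟨ht, fun b hb hsum => ?_⟩
      have hbmem : b ∈ (ray 1 (-1) (p.1 + t, p.2 + t) ∪ ray (-1) 1 (p.1 + t, p.2 + t)) := by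
        rcases le_total (p.1 + t) b.1 with h | h
        · left
          refine ⟨b.1 - (p.1 + t), by linarith, ?_⟩
          rw [Prod.ext_iff]
          constructor <;> simp <;> linarith
        · right
          refine ⟨(p.1 + t) - b.1, by linarith, ?_⟩
          rw [Prod.ext_iff]
          constructor <;> simp <;> linarith
      exact Set.eq_empty_iff_forall_notMem.1 hemp b ⟨hbmem, hb⟩
    · rintro ⟨ht, hsum⟩
      refine ⟨ht, Set.eq_empty_iff_forall_notMem.2 ?_⟩
      rintro b ⟨hbr, hb⟩
      rcases hbr with ⟨s, hs, hbs⟩ | ⟨s, hs, hbs⟩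
      · exact hsum b hb (by rw [hbs]; simp; ring)
      · exact hsum b hb (by rw [hbs]; simp; ring)
  have hdist : ∀ b : ℝ × ℝ, dist b p = max |b.1 - p.1| |b.2 - p.2| := by
    intro b; rw [Prod.dist_eq, Real.dist_eq, Real.dist_eq]
  -- positivity of sums
  have hsum_pos : ∀ b ∈ A, p.1 + p.2 < b.1 + b.2 := by
    intro b hb
    have hbp : b ≠ p := fun h => hp (h ▸ hb)
    have hd : 0 < dist b p := dist_pos.2 hbp
    have h1 : dist b p ≠ -(b.1 - p.1) := by
      intro h
      refine Set.eq_empty_iff_forall_notMem.1 h1m b ⟨?_, hb⟩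
      show dist p b = -1 * (b.1 - p.1)
      rw [dist_comm]; linarith [h]
    have h2 : dist b p ≠ -(b.2 - p.2) := by
      intro h
      refine Set.eq_empty_iff_forall_notMem.1 h2m b ⟨?_, hb⟩
      show dist p b = -1 * (b.2 - p.2)
      rw [dist_comm]; linarith [h]
    have hu : |b.1 - p.1| ≤ dist b p := by rw [hdist]; exact le_max_left _ _
    have hv : |b.2 - p.2| ≤ dist b p := by rw [hdist]; exact le_max_right _ _
    have hu' : -(b.1 - p.1) < dist b p :=
      lt_of_le_of_ne (le_trans (neg_le_abs _) hu) (fun h => h1 h.symm)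
    have hv' : -(b.2 - p.2) < dist b p :=
      lt_of_le_of_ne (le_trans (neg_le_abs _) hv) (fun h => h2 h.symm)
    have := hdist b
    rcases max_cases |b.1 - p.1| |b.2 - p.2| with ⟨hm, _⟩ | ⟨hm, _⟩
    · rw [hm] at this
      rcases abs_cases (b.1 - p.1) with ⟨h, _⟩ | ⟨h, _⟩ <;> nlinarith
    · rw [hm] at this
      rcases abs_cases (b.2 - p.2) with ⟨h, _⟩ | ⟨h, _⟩ <;> nlinarith
  have h0T : (0 : ℝ) ∈ T := by
    rw [hline]
    exact ⟨le_refl 0, fun b hb h => absurd h (by have := hsum_pos b hb; intro h; linarith)⟩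
  intro a ha
  by_cases hbdd : BddAbove T
  · -- main case
    have ht₀0 : 0 ≤ t₀ := by rw [ht₀]; exact le_csSup hbdd h0T
    have hkey : ∀ b ∈ A, p.1 + p.2 + 2 * t₀ ≤ b.1 + b.2 := by
      by_contra hcon
      push_neg at hcon
      obtain ⟨b, hb, hblt⟩ := hcon
      have hm : (b.1 + b.2 - p.1 - p.2) / 2 < t₀ := by linarith
      obtain ⟨t, htT, htm⟩ := exists_lt_of_lt_csSup ⟨0, h0T⟩ (by rw [ht₀] at hm; exact hm)
      obtain ⟨ht0, htmiss⟩ := (hline t).1 htT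
      obtain ⟨B, hB⟩ := hbdd
      set t' : ℝ := max B t + 1 with ht'
      have ht'T : t' ∉ T := by
        intro h
        have h1 : t' ≤ B := hB h
        have h2 : B ≤ max B t := le_max_left B t
        simp only [ht'] at h1
        linarith
      have ht'0 : 0 ≤ t' := by
        have := le_max_right B t
        simp only [ht']; linarith
      have hc : ∃ c ∈ A, c.1 + c.2 = p.1 + p.2 + 2 * t' := by
        by_contra hc
        push_neg at hc
        exact ht'T ((hline t').2 ⟨ht'0, fun c hcA => hc c hcA⟩)
      obtain ⟨c, hcA, hcsum⟩ := hc
      obtain ⟨γ, ⟨hγ0, hγD, hiso⟩, hγA⟩ := hgc b hb c hcA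
      set D := dist b c with hD
      have hD0 : (0 : ℝ) ≤ D := dist_nonneg
      have hcont : ContinuousOn γ (Set.Icc 0 D) := by
        have hlip : LipschitzOnWith 1 γ (Set.Icc 0 D) := by
          apply LipschitzOnWith.of_dist_le_mul
          intro x hx y hy
          rw [hiso x hx y hy, NNReal.coe_one, one_mul, Real.dist_eq]
        exact hlip.continuousOn
      have hfcont : ContinuousOn (fun s => (γ s).1 + (γ s).2) (Set.Icc 0 D) :=
        (continuous_fst.add continuous_snd).comp_continuousOn hcont
      have hmem : p.1 + p.2 + 2 * t ∈ Set.Icc ((γ 0).1 + (γ 0).2) ((γ D).1 + (γ D).2) := by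
        rw [hγ0, hγD]
        constructor
        · linarith [htm]
        · rw [hcsum]
          have : t ≤ t' := by simp only [ht']; linarith [le_max_right B t]
          linarith
      obtain ⟨x, hx, hfx⟩ := intermediate_value_Icc hD0 hfcont hmem
      exact htmiss (γ x) (hγA x hx) hfx
    -- final inequality
    have hu : |a.1 - p.1| ≤ dist a p := by rw [hdist]; exact le_max_left _ _
    have hv : |a.2 - p.2| ≤ dist a p := by rw [hdist]; exact le_max_right _ _
    have hu1 : a.1 - p.1 ≤ dist a p := le_trans (le_abs_self _) hu
    have hv1 : a.2 - p.2 ≤ dist a p := le_trans (le_abs_self _) hv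
    have hu2 : -(a.1 - p.1) ≤ dist a p := le_trans (neg_le_abs _) hu
    have hv2 : -(a.2 - p.2) ≤ dist a p := le_trans (neg_le_abs _) hv
    have hsk := hkey a ha
    have hq : dist a (p.1 + t₀, p.2 + t₀) = max |a.1 - (p.1 + t₀)| |a.2 - (p.2 + t₀)| := by
      simp [Prod.dist_eq, Real.dist_eq]
    rw [hq]
    apply max_le
    · rw [abs_le]; constructor <;> linarith
    · rw [abs_le]; constructor <;> linarith
  · -- unbounded case: sSup = 0
    have : t₀ = 0 := by rw [ht₀]; exact Real.sSup_of_not_bddAbove hbdd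
    rw [this]
    simp
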